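/- For every e >= 3, there exists an n ≡ 0 (mod 2e) and an e-star system of order n that is uniquely 2-chromatic with a strongly equitable 2-colouring: it admits a weak 2-colouring with both classes of size n/2, it admits no weak 1-colouring, and any two weak 2-colourings of the system differ only by a permutation of the two colours. -/

import Mathlib

structure EStar (n e : ℕ) where
  centre : Fin n
  leaves : Finset (Fin n)
  card_leaves : leaves.card = e
  centre_not_leaf : centre ∉ leaves

instance {n e : ℕ} : DecidableEq (EStar n e) := fun a b =>
  decidable_of_iff (a.centre = b.centre ∧ a.leaves = b.leaves)
    (by cases a; cases b; simp)

/-- The edge set of an `e`-star: all edges joining the centre to a leaf. -/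
def EStar.edges {n e : ℕ} (S : EStar n e) : Finset (Sym2 (Fin n)) :=
  S.leaves.image (fun a => s(S.centre, a))

/-- The vertex set of an `e`-star. -/
def EStar.verts {n e : ℕ} (S : EStar n e) : Finset (Fin n) :=
  insert S.centre S.leaves

/-- An `e`-star system of order `n`: a collection of `e`-stars whose edge sets
partition the edge set of the complete graph `K_n`. -/
structure EStarSystem (n e : ℕ) where
  stars : Finset (EStar n e)
  partition : ∀ p : Sym2 (Fin n), ¬ p.IsDiag →
    ∃! S, S ∈ stars ∧ p ∈ EStar.edges S

/-- A weak colouring: no star of the system has all of its vertices one colour. -/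
def IsWeakColouring {n e k : ℕ} (sys : EStarSystem n e) (c : Fin n → Fin k) : Prop :=
  ∀ S ∈ sys.stars, ∃ a ∈ S.leaves, c a ≠ c S.centre

def Colourable {n e : ℕ} (sys : EStarSystem n e) (k : ℕ) : Prop :=
  ∃ c : Fin n → Fin k, IsWeakColouring sys c

def Chromatic {n e : ℕ} (sys : EStarSystem n e) (k : ℕ) : Prop :=
  Colourable sys k ∧ ¬ Colourable sys (k - 1)

/-- The size of the colour class of colour `i`. -/
def classCard {n k : ℕ} (c : Fin n → Fin k) (i : Fin k) : ℕ :=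
  (Finset.univ.filter (fun v => c v = i)).card

def UniquelyColourable {n e : ℕ} (sys : EStarSystem n e) (k : ℕ) : Prop :=
  ∀ c₁ c₂ : Fin n → Fin k, IsWeakColouring sys c₁ → IsWeakColouring sys c₂ →
    ∃ π : Equiv.Perm (Fin k), c₂ = π ∘ c₁



namespace S14
open Finset

def K (e : ℕ) : ℕ := (2*e-1).choose e
def mP (e : ℕ) : ℕ := 2*e*(K e + 3)
def NP (e : ℕ) : ℕ := e * mP e
def MP (e : ℕ) : ℕ := 2 * NP e - 1
def nP (e : ℕ) : ℕ := 2 * NP e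
def KK (e : ℕ) : ℕ := 2*e*K e
def NP1 (e : ℕ) : ℕ := NP e + 1
def NP2 (e : ℕ) : ℕ := NP1 e + 4*e - 3
def NP3 (e : ℕ) : ℕ := NP2 e + 2*e - 1
def NP4 (e : ℕ) : ℕ := NP3 e + 2*e
def astar (e : ℕ) : ℕ := KK e + 2*e + 1

lemma K_pos {e : ℕ} (he : 3 ≤ e) : 0 < K e := Nat.choose_pos (by omega)

lemma NP_even (e : ℕ) : NP e = 2*(e*e*(K e + 3)) := by unfold NP mP; ring

/-- Main size bound. -/
lemma NP_lb {e : ℕ} (he : 3 ≤ e) : KK e + 14*e + 14 ≤ NP e := by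
  have hk := K_pos he
  have h1 : NP e = 2*(e*e)*(K e) + 6*(e*e) := by unfold NP mP; ring
  have h2 : 2*e*(K e)*3 ≤ 2*e*(K e)*e := Nat.mul_le_mul_left _ he
  have h3 : 9 ≤ e*e := by nlinarith
  have h4 : e*3 ≤ e*e := Nat.mul_le_mul_left _ he
  unfold KK
  nlinarith

lemma nums {e : ℕ} (he : 3 ≤ e) :
    NP e % 2 = 0 ∧ NP1 e % 2 = 1 ∧ NP1 e = NP e + 1 ∧
    NP2 e % 2 = 0 ∧ NP3 e % 2 = 1 ∧ NP4 e % 2 = 1 ∧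
    NP4 e + 2*e ≤ MP e ∧ NP e + 10 * e ≤ MP e ∧
    KK e % 2 = 0 ∧ KK e + 14*e + 14 ≤ NP e ∧ nP e = MP e + 1 ∧
    0 < NP e ∧ MP e = 2 * NP e - 1 ∧ astar e = KK e + 2*e + 1 ∧
    NP2 e = NP e + 4*e - 2 ∧ NP3 e = NP e + 6*e - 3 ∧ NP4 e = NP e + 8*e - 3 := by
  have h1 := NP_lb he
  have h2 := NP_even e
  have h3 : KK e = 2*(e*K e) := by unfold KK; ring
  unfold NP4 NP3 NP2 NP1 MP nP astar
  omega

/-- The key numeric inequality for the filler partition. -/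
lemma numMain {e : ℕ} (he : 3 ≤ e) {g : ℕ} (hg : g ≤ K e + 2) :
    g + 2 ≤ mP e ∧ NP e + 6 ≤ 2 * ((mP e - g) * (e - 1)) := by
  obtain ⟨E, rfl⟩ : ∃ E, e = E + 3 := ⟨e - 3, by omega⟩
  have hk : 1 ≤ K (E+3) := K_pos he
  have hmP : mP (E+3) = (2*E+5)*(K (E+3)+3) + (K (E+3)+3) := by unfold mP; ring
  have hNP : NP (E+3) = (E+3) * mP (E+3) := rfl
  set k := K (E+3) with hkdef
  have hm2 : g + 2 ≤ mP (E+3) := by nlinarith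
  refine ⟨hm2, ?_⟩
  have hd : (2*E+5)*(k+3) + 1 ≤ mP (E+3) - g := by omega
  have he1 : (E + 3) - 1 = E + 2 := by omega
  rw [he1]
  have step : ((2*E+5)*(k+3) + 1) * (E+2) ≤ (mP (E+3) - g) * (E + 2) :=
    Nat.mul_le_mul_right _ hd
  have expand : NP (E+3) + 6 ≤ 2 * (((2*E+5)*(k+3) + 1) * (E+2)) := by
    rw [hNP, hmP]; nlinarith
  omega

/-- Count of numbers with given parity in `range L`. -/
lemma cntpar (r : ℕ) (hr : r < 2) : ∀ L : ℕ,
    ((range L).filter (fun t => t % 2 = r)).card = (L + 1 - r) / 2 := by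
  intro L
  induction L with
  | zero => simp; omega
  | succ n ih =>
    rw [range_add_one, filter_insert]
    by_cases h : n % 2 = r
    · rw [if_pos h, card_insert_of_notMem (by simp), ih]; omega
    · rw [if_neg h, ih]; omega

/-- Cardinality of an arithmetic-progression subset of `Fin n'`. -/
lemma card_valset {n' : ℕ} (a d c : ℕ) (hd : 0 < d) (hbound : a + d * c ≤ n') :
    ((univ : Finset (Fin n')).filter (fun v => ∃ i, i < c ∧ v.val = a + d * i)).card = c := by
  rcases Nat.eq_zero_or_pos c with rfl | hc
  · simp
  have key : ∀ i, i < c → a + d * i < n' := by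
    intro i hi
    have h2 := Nat.mul_le_mul_left d (show i + 1 ≤ c from hi)
    have h3 : d * i + d ≤ d * c := by rw [Nat.mul_add, Nat.mul_one] at h2; omega
    omega
  have key2 := Finset.card_nbij'
    (s := (univ : Finset (Fin n')).filter (fun v => ∃ i, i < c ∧ v.val = a + d * i))
    (t := range c)
    (fun v => (v.val - a)/d) (fun i => ⟨a + d * (min i (c-1)), key _ (by omega)⟩)
    ?_ ?_ ?_ ?_
  · rwa [card_range] at key2
  · rintro v hv
    simp only [mem_coe, mem_filter] at hv
    obtain ⟨-, i, hi, hval⟩ := hv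
    simp only [mem_coe, mem_range]
    show (v.val - a)/d < c
    rw [hval, Nat.add_sub_cancel_left, Nat.mul_div_cancel_left _ hd]
    exact hi
  · rintro i hi
    simp only [mem_coe, mem_range] at hi
    simp only [mem_coe, mem_filter, mem_univ, true_and]
    exact ⟨min i (c-1), by omega, rfl⟩
  · rintro v hv
    simp only [mem_coe, mem_filter] at hv
    obtain ⟨-, i, hi, hval⟩ := hv
    apply Fin.ext
    show a + d * (min ((v.val - a)/d) (c-1)) = v.val
    rw [hval, Nat.add_sub_cancel_left, Nat.mul_div_cancel_left _ hd,
        min_eq_left (by omega : i ≤ c - 1)]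
  · rintro i hi
    simp only [mem_coe, mem_range] at hi
    show (a + d * (min i (c-1)) - a)/d = i
    rw [Nat.add_sub_cancel_left, Nat.mul_div_cancel_left _ hd,
        min_eq_left (by omega : i ≤ c - 1)]

lemma card_val_lt {n' : ℕ} (t : ℕ) (ht : t ≤ n') :
    ((univ : Finset (Fin n')).filter (fun v => v.val < t)).card = t := by
  calc ((univ : Finset (Fin n')).filter (fun v => v.val < t)).card
      = ((univ : Finset (Fin n')).filter (fun v => ∃ i, i < t ∧ v.val = 0 + 1*i)).card := by
        apply congrArg
        apply filter_congr
        intro v _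
        constructor
        · intro hv; exact ⟨v.val, hv, by omega⟩
        · rintro ⟨i, hi, hv⟩; omega
    _ = t := card_valset 0 1 t (by omega) (by omega)


/-! ### The pool of a centre -/

def dst (e : ℕ) (x z : Fin (nP e)) : ℕ := (z.val + MP e - x.val) % MP e

def pool (e : ℕ) (x : Fin (nP e)) : Finset (Fin (nP e)) :=
  univ.filter (fun z => z.val = MP e ∨ (z.val < MP e ∧ z ≠ x ∧ (dst e x z) % 2 = 1))

lemma mem_pool {e : ℕ} {x z : Fin (nP e)} :
    z ∈ pool e x ↔ (z.val = MP e ∨ (z.val < MP e ∧ z ≠ x ∧ (dst e x z) % 2 = 1)) := by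
  simp [pool]

lemma val_lt_n {e : ℕ} (he : 3 ≤ e) (v : Fin (nP e)) : v.val ≤ MP e := by
  have h := v.isLt
  have h2 := (nums he).2.2.2.2.2.2.2.2.2.2.1
  omega

lemma dst_up {e : ℕ} {x z : Fin (nP e)} (hz : z.val < MP e) (h : x.val < z.val) :
    dst e x z = z.val - x.val := by
  unfold dst
  have h1 : z.val + MP e - x.val = MP e + (z.val - x.val) := by omega
  rw [h1, Nat.add_mod_left]
  exact Nat.mod_eq_of_lt (by omega)

lemma dst_down {e : ℕ} {x z : Fin (nP e)} (hx : x.val < MP e) (h : z.val < x.val) :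
    dst e x z = z.val + MP e - x.val := by
  unfold dst
  exact Nat.mod_eq_of_lt (by omega)

lemma dst_sum {e : ℕ} {x z : Fin (nP e)} (hx : x.val < MP e) (hz : z.val < MP e)
    (hne : x ≠ z) : dst e x z + dst e z x = MP e := by
  have hne' : x.val ≠ z.val := fun h => hne (Fin.ext h)
  rcases lt_or_gt_of_ne hne' with h | h
  · rw [dst_up hz h, dst_down (x := z) (z := x) hz h]; omega
  · rw [dst_down hx h, dst_up (x := z) (z := x) hx h]; omega

/-- Exactly one direction of an edge between finite vertices is "odd". -/
lemma pool_excl {e : ℕ} (he : 3 ≤ e) {x z : Fin (nP e)} (hx : x.val < MP e)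
    (hz : z.val < MP e) (hne : x ≠ z) :
    (z ∈ pool e x ↔ ¬ (x ∈ pool e z)) := by
  have hsum := dst_sum hx hz hne
  have hM : MP e % 2 = 1 := by
    have h1 := (nums he).2.2.2.2.2.2.2.2.2.2.2.1
    have h2 := (nums he).2.2.2.2.2.2.2.2.2.2.2.2.1
    omega
  rw [mem_pool, mem_pool]
  constructor
  · rintro (h | ⟨-, -, hpar⟩)
    · omega
    · rintro (h2 | ⟨-, -, hpar2⟩) <;> omega
  · intro h
    rw [not_or] at h
    obtain ⟨-, h2⟩ := h
    have h3 : dst e z x % 2 ≠ 1 := fun hp => h2 ⟨hx, hne, hp⟩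
    exact Or.inr ⟨hz, Ne.symm hne, by omega⟩

lemma not_mem_pool_self {e : ℕ} {x : Fin (nP e)} (hx : x.val < MP e) : x ∉ pool e x := by
  rw [mem_pool]
  rintro (h | ⟨-, h, -⟩) <;> simp_all

/-- Auxiliary: value of dst from x to (x + d) mod M. -/
lemma dst_mk {e : ℕ} {x : Fin (nP e)} (hx : x.val < MP e) (d : ℕ) (hd : d < MP e)
    {z : Fin (nP e)} (hzval : z.val = (x.val + d) % MP e) : dst e x z = d := by
  have hM : 0 < MP e := by omega
  unfold dst
  rcases Nat.lt_or_ge (x.val + d) (MP e) with h | h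
  · rw [hzval, Nat.mod_eq_of_lt h]
    have h1 : x.val + d + MP e - x.val = MP e + d := by omega
    rw [h1, Nat.add_mod_left]
    exact Nat.mod_eq_of_lt hd
  · have h2 : (x.val + d) % MP e = x.val + d - MP e := by
      rw [Nat.mod_eq_sub_mod h]
      exact Nat.mod_eq_of_lt (by omega)
    rw [hzval, h2]
    have h3 : x.val + d - MP e + MP e - x.val = d := by omega
    rw [h3]
    exact Nat.mod_eq_of_lt hd

/-- The pool of a finite centre has exactly `NP e` elements. -/
lemma card_pool {e : ℕ} (he : 3 ≤ e) {x : Fin (nP e)} (hx : x.val < MP e) :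
    (pool e x).card = NP e := by
  have hnum := nums he
  have hM : 0 < MP e := by omega
  have hn : nP e = MP e + 1 := hnum.2.2.2.2.2.2.2.2.2.2.1
  have hsplit : pool e x =
      (univ.filter (fun z : Fin (nP e) => z.val = MP e)) ∪
      (univ.filter (fun z : Fin (nP e) => z.val < MP e ∧ z ≠ x ∧ (dst e x z) % 2 = 1)) := by
    unfold pool
    rw [← filter_or]
  rw [hsplit, card_union_of_disjoint]
  · have c1 : (univ.filter (fun z : Fin (nP e) => z.val = MP e)).card = 1 := by
      rw [Finset.card_eq_one]
      refine ⟨⟨MP e, by omega⟩, ?_⟩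
      ext z
      simp only [mem_filter, mem_univ, true_and, mem_singleton]
      constructor
      · intro h; exact Fin.ext h
      · rintro rfl; rfl
    have c2 : (univ.filter (fun z : Fin (nP e) => z.val < MP e ∧ z ≠ x ∧ (dst e x z) % 2 = 1)).card
        = NP e - 1 := by
      have hbij := Finset.card_nbij'
        (s := univ.filter (fun z : Fin (nP e) => z.val < MP e ∧ z ≠ x ∧ (dst e x z) % 2 = 1))
        (t := (range (MP e)).filter (fun d => d % 2 = 1))
        (fun z => dst e x z)
        (fun d => ⟨(x.val + d) % MP e, by have := Nat.mod_lt (x.val + d) hM; omega⟩)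
        ?_ ?_ ?_ ?_
      · rw [hbij, cntpar 1 (by omega) (MP e)]
        omega
      · rintro z hz
        simp only [mem_coe, mem_filter, mem_univ, true_and] at hz ⊢
        obtain ⟨hzM, hzx, hpar⟩ := hz
        simp only [mem_range]
        refine ⟨?_, hpar⟩
        unfold dst
        exact Nat.mod_lt _ hM
      · rintro d hd
        simp only [mem_coe, mem_filter, mem_range] at hd
        obtain ⟨hdM, hpar⟩ := hd
        simp only [mem_coe, mem_filter, mem_univ, true_and]
        have hmem : ((x.val + d) % MP e) < MP e := Nat.mod_lt _ hM
        have hdst : dst e x ⟨(x.val + d) % MP e, by omega⟩ = d := dst_mk hx d hdM rfl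
        refine ⟨hmem, ?_, by rw [hdst]; exact hpar⟩
        intro hcontra
        have : ((x.val + d) % MP e) = x.val := by
          have := congrArg Fin.val hcontra
          simpa using this
        have hx' : x.val % MP e = x.val := Nat.mod_eq_of_lt hx
        have : (x.val + d) % MP e = x.val % MP e := by omega
        have hdvd : MP e ∣ d := by
          have hmod : x.val + d ≡ x.val + 0 [MOD MP e] := by
            unfold Nat.ModEq
            simpa using this
          have h9 := Nat.ModEq.add_left_cancel' x.val hmod
          exact (Nat.modEq_zero_iff_dvd).mp h9
        have : d = 0 := Nat.eq_zero_of_dvd_of_lt hdvd hdM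
        omega
      · rintro z hz
        simp only [mem_coe, mem_filter, mem_univ, true_and] at hz
        obtain ⟨hzM, hzx, hpar⟩ := hz
        apply Fin.ext
        show (x.val + dst e x z) % MP e = z.val
        have hne' : x.val ≠ z.val := fun h => hzx (Fin.ext h.symm)
        rcases lt_or_gt_of_ne hne' with h | h
        · rw [dst_up hzM h]
          have : x.val + (z.val - x.val) = z.val := by omega
          rw [this]
          exact Nat.mod_eq_of_lt hzM
        · rw [dst_down hx h]
          have : x.val + (z.val + MP e - x.val) = MP e + z.val := by omega
          rw [this, Nat.add_mod_left]
          exact Nat.mod_eq_of_lt hzM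
      · rintro d hd
        simp only [mem_coe, mem_filter, mem_range] at hd
        exact dst_mk hx d hd.1 rfl
    omega
  · rw [Finset.disjoint_left]
    intro z hz1 hz2
    simp only [mem_filter] at hz1 hz2
    omega


lemma dst_inv {e : ℕ} {x z : Fin (nP e)} (hx : x.val < MP e) (hzM : z.val < MP e)
    (hzx : z ≠ x) : (x.val + dst e x z) % MP e = z.val := by
  have hne' : x.val ≠ z.val := fun h => hzx (Fin.ext h.symm)
  rcases lt_or_gt_of_ne hne' with h | h
  · rw [dst_up hzM h]
    have h2 : x.val + (z.val - x.val) = z.val := by omega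
    rw [h2]
    exact Nat.mod_eq_of_lt hzM
  · rw [dst_down hx h]
    have h2 : x.val + (z.val + MP e - x.val) = MP e + z.val := by omega
    rw [h2, Nat.add_mod_left]
    exact Nat.mod_eq_of_lt hzM

lemma cnt_tail {e : ℕ} (c : ℕ) (hc : c ≤ MP e) :
    ((range (MP e)).filter (fun d => d % 2 = 1 ∧ c ≤ d)).card = MP e / 2 - c / 2 := by
  have hset : (range (MP e)).filter (fun d => d % 2 = 1 ∧ c ≤ d)
      = ((range (MP e)).filter (fun d => d % 2 = 1)) \ ((range c).filter (fun d => d % 2 = 1)) := by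
    ext d
    simp only [mem_filter, mem_sdiff, mem_range]
    omega
  rw [hset, card_sdiff_of_subset (by intro d hd; simp only [mem_filter, mem_range] at hd ⊢; omega),
    cntpar 1 (by omega), cntpar 1 (by omega)]
  omega

/-- Same-class bound for the pool. -/
lemma scount_le {e : ℕ} (he : 3 ≤ e) {x : Fin (nP e)} (hx : x.val < MP e) :
    2 * ((pool e x).filter (fun z => (z.val < NP e ↔ x.val < NP e))).card ≤ NP e + 6 := by
  have hnum := nums he
  have hMeq : MP e = 2 * NP e - 1 := hnum.2.2.2.2.2.2.2.2.2.2.2.2.1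
  have hNpos : 0 < NP e := hnum.2.2.2.2.2.2.2.2.2.2.2.1
  have hM : 0 < MP e := by omega
  set S := (pool e x).filter (fun z => (z.val < NP e ↔ x.val < NP e)) with hS
  set Sfin := S.filter (fun z => z.val < MP e) with hSfin
  have hScard : S.card ≤ Sfin.card + 1 := by
    have hsub : S ⊆ Sfin ∪ (univ.filter (fun z : Fin (nP e) => z.val = MP e)) := by
      intro z hz
      rcases Nat.lt_or_ge z.val (MP e) with h | h
      · exact mem_union_left _ (by rw [hSfin, mem_filter]; exact ⟨hz, h⟩)
      · have := val_lt_n he z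
        exact mem_union_right _ (by simp only [mem_filter, mem_univ, true_and]; omega)
    have hc1 : (univ.filter (fun z : Fin (nP e) => z.val = MP e)).card = 1 := by
      rw [Finset.card_eq_one]
      refine ⟨⟨MP e, by omega⟩, ?_⟩
      ext z
      simp only [mem_filter, mem_univ, true_and, mem_singleton]
      exact ⟨fun h => Fin.ext h, fun h => by rw [h]⟩
    calc S.card ≤ (Sfin ∪ (univ.filter (fun z : Fin (nP e) => z.val = MP e))).card :=
          card_le_card hsub
      _ ≤ Sfin.card + 1 := by
          have := card_union_le Sfin (univ.filter (fun z : Fin (nP e) => z.val = MP e))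
          omega
  set Dset := (range (MP e)).filter
      (fun d => d % 2 = 1 ∧ ((x.val + d) % MP e < NP e ↔ x.val < NP e)) with hDset
  have hSfinD : Sfin.card ≤ Dset.card := by
    apply Finset.card_le_card_of_injOn (fun z => dst e x z)
    · intro z hz
      rw [mem_coe, mem_filter, hS, mem_filter, mem_pool] at hz
      obtain ⟨⟨hzpool, hiff⟩, hzM⟩ := hz
      have hzx : z ≠ x := by
        rcases hzpool with h | ⟨-, h, -⟩
        · omega
        · exact h
      have hpar : dst e x z % 2 = 1 := by
        rcases hzpool with h | ⟨-, -, h⟩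
        · omega
        · exact h
      rw [hDset, mem_coe, mem_filter, mem_range]
      refine ⟨Nat.mod_lt _ hM, hpar, ?_⟩
      rw [dst_inv hx hzM hzx]
      exact hiff
    · intro z hz z' hz' heq
      simp only [Finset.mem_coe] at hz hz'
      rw [hSfin, mem_filter, hS, mem_filter, mem_pool] at hz hz'
      obtain ⟨⟨hzpool, -⟩, hzM⟩ := hz
      obtain ⟨⟨hzpool', -⟩, hzM'⟩ := hz'
      have hzx : z ≠ x := by rcases hzpool with h | ⟨-, h, -⟩; omega; exact h
      have hzx' : z' ≠ x := by rcases hzpool' with h | ⟨-, h, -⟩; omega; exact h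
      have h1 := dst_inv hx hzM hzx
      have h2 := dst_inv hx hzM' hzx'
      apply Fin.ext
      simp only at heq
      rw [← h1, ← h2, heq]
  have key : 2 * Dset.card ≤ NP e + 4 := by
    have hmodeval : ∀ d, d < MP e → (x.val + d) % MP e =
        if x.val + d < MP e then x.val + d else x.val + d - MP e := by
      intro d hd
      split_ifs with h
      · exact Nat.mod_eq_of_lt h
      · rw [Nat.mod_eq_sub_mod (by omega)]
        exact Nat.mod_eq_of_lt (by omega)
    rcases Nat.lt_or_ge x.val (NP e) with hA | hB
    · -- x in class A
      have hsub : Dset ⊆ ((range (NP e - x.val)).filter (fun d => d % 2 = 1)) ∪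
          ((range (MP e)).filter (fun d => d % 2 = 1 ∧ MP e - x.val ≤ d)) := by
        intro d hd
        rw [hDset, mem_filter, mem_range] at hd
        obtain ⟨hdM, hpar, hcond⟩ := hd
        rcases Nat.lt_or_ge (x.val + d) (MP e) with h | h
        · have hme := hmodeval d hdM
          rw [if_pos h] at hme
          apply mem_union_left
          simp only [mem_filter, mem_range]
          omega
        · have hme := hmodeval d hdM
          rw [if_neg (by omega)] at hme
          apply mem_union_right
          simp only [mem_filter, mem_range]
          omega
      have hc1 := cntpar 1 (by omega) (NP e - x.val)
      have hc2 := cnt_tail (e := e) (MP e - x.val) (by omega)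
      have := card_le_card hsub
      have hcu := card_union_le ((range (NP e - x.val)).filter (fun d => d % 2 = 1))
        ((range (MP e)).filter (fun d => d % 2 = 1 ∧ MP e - x.val ≤ d))
      omega
    · -- x in class B
      have hsub : Dset ⊆ ((range (MP e - x.val)).filter (fun d => d % 2 = 1)) ∪
          ((range (MP e)).filter (fun d => d % 2 = 1 ∧ MP e - x.val + NP e ≤ d)) := by
        intro d hd
        rw [hDset, mem_filter, mem_range] at hd
        obtain ⟨hdM, hpar, hcond⟩ := hd
        rcases Nat.lt_or_ge (x.val + d) (MP e) with h | h
        · have hme := hmodeval d hdM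
          rw [if_pos h] at hme
          apply mem_union_left
          simp only [mem_filter, mem_range]
          omega
        · have hme := hmodeval d hdM
          rw [if_neg (by omega)] at hme
          apply mem_union_right
          simp only [mem_filter, mem_range]
          omega
      have hc1 := cntpar 1 (by omega) (MP e - x.val)
      have hc2 := cnt_tail (e := e) (MP e - x.val + NP e) (by omega)
      have := card_le_card hsub
      have hcu := card_union_le ((range (MP e - x.val)).filter (fun d => d % 2 = 1))
        ((range (MP e)).filter (fun d => d % 2 = 1 ∧ MP e - x.val + NP e ≤ d))
      omega
  omega

/-- Abstract partition lemma: a set of size `e*r` with few "same" elements can be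
partitioned into `r` groups of size `e`, each containing a "cross" element. -/
lemma lemA {α : Type*} [DecidableEq α] {e : ℕ} (hepos : 0 < e) (f : α → Prop)
    [DecidablePred f] :
    ∀ (r : ℕ) (R : Finset α), R.card = e * r → (R.filter f).card ≤ r * (e - 1) →
    ∃ P : Finset (Finset α), (∀ g ∈ P, g.card = e) ∧ (∀ g ∈ P, ∃ z ∈ g, ¬ f z) ∧
      (∀ g₁ ∈ P, ∀ g₂ ∈ P, g₁ ≠ g₂ → Disjoint g₁ g₂) ∧ P.biUnion id = R := by
  intro r
  induction r with
  | zero =>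
    intro R hc _
    refine ⟨∅, by simp, by simp, by simp, ?_⟩
    simp only [Finset.biUnion_empty]
    exact (card_eq_zero.mp (by omega)).symm
  | succ r ih =>
    intro R hc hs
    have hsplit := card_filter_add_card_filter_not (s := R) (p := f)
    have hprod1 : e * (r + 1) = e * r + e := by ring
    have hprod2 : (r+1) * (e-1) = r * (e-1) + (e-1) := by ring
    have hprod3 : r * (e-1) ≤ e * r := by
      calc r * (e-1) ≤ r * e := Nat.mul_le_mul_left _ (by omega)
        _ = e * r := Nat.mul_comm _ _
    set s := (R.filter f).card with hsdef
    set t := min (e-1) s with ht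
    obtain ⟨Sg, hSg, hSgc⟩ := Finset.exists_subset_card_eq
      (show t ≤ (R.filter f).card by omega)
    obtain ⟨Cg, hCg, hCgc⟩ := Finset.exists_subset_card_eq
      (show e - t ≤ (R.filter (fun z => ¬ f z)).card by
        have h1 : s ≤ (r+1) * (e-1) := hs
        omega)
    have hdisj : Disjoint Sg Cg := by
      apply Finset.disjoint_left.mpr
      intro a ha hb
      have h1 := hSg ha
      have h2 := hCg hb
      rw [mem_filter] at h1 h2
      exact h2.2 h1.2
    set g := Sg ∪ Cg with hg
    have hgcard : g.card = e := by
      rw [hg, card_union_of_disjoint hdisj, hSgc, hCgc]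
      omega
    have hgR : g ⊆ R := by
      rw [hg]
      apply union_subset
      · exact hSg.trans (filter_subset _ _)
      · exact hCg.trans (filter_subset _ _)
    have hcross : ∃ z ∈ g, ¬ f z := by
      have hCne : Cg.Nonempty := by
        rw [← card_pos, hCgc]
        omega
      obtain ⟨z, hz⟩ := hCne
      have := hCg hz
      rw [mem_filter] at this
      exact ⟨z, mem_union_right _ hz, this.2⟩
    set R' := R \ g with hR'
    have hR'c : R'.card = e * r := by
      rw [hR', card_sdiff_of_subset hgR, hgcard, hc]
      omega
    have hR's : (R'.filter f).card ≤ r * (e - 1) := by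
      have hsub : R'.filter f = (R.filter f) \ Sg := by
        rw [hR']
        ext a
        simp only [mem_filter, mem_sdiff, hg, mem_union]
        constructor
        · rintro ⟨⟨haR, hag⟩, haf⟩
          exact ⟨⟨haR, haf⟩, fun h => hag (Or.inl h)⟩
        · rintro ⟨⟨haR, haf⟩, haS⟩
          refine ⟨⟨haR, fun h => ?_⟩, haf⟩
          rcases h with h | h
          · exact haS h
          · have := hCg h
            rw [mem_filter] at this
            exact this.2 haf
      rw [hsub, card_sdiff_of_subset (hSg)]
      have h1 : s ≤ (r+1) * (e-1) := hs
      have h2 : (r+1) * (e-1) = r * (e-1) + (e-1) := by ring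
      omega
    obtain ⟨P', hP1, hP2, hP3, hP4⟩ := ih R' hR'c hR's
    have hgnotin : ∀ p ∈ P', Disjoint g p := by
      intro p hp
      apply Finset.disjoint_left.mpr
      intro a hag hap
      have : a ∈ R' := by
        rw [← hP4]
        exact mem_biUnion.mpr ⟨p, hp, hap⟩
      rw [hR', mem_sdiff] at this
      exact this.2 hag
    refine ⟨insert g P', ?_, ?_, ?_, ?_⟩
    · intro g' hg'
      rcases mem_insert.mp hg' with rfl | h
      · exact hgcard
      · exact hP1 _ h
    · intro g' hg'
      rcases mem_insert.mp hg' with rfl | h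
      · exact hcross
      · exact hP2 _ h
    · intro g₁ hg₁ g₂ hg₂ hne
      rcases mem_insert.mp hg₁ with rfl | h₁ <;> rcases mem_insert.mp hg₂ with rfl | h₂
      · exact absurd rfl hne
      · exact hgnotin _ h₂
      · exact (hgnotin _ h₁).symm
      · exact hP3 _ h₁ _ h₂ hne
    · rw [biUnion_insert, hP4]
      simp only [id]
      rw [hR']
      exact union_sdiff_of_subset hgR


/-! ### Special sets -/

def aset (e : ℕ) (a d c : ℕ) : Finset (Fin (nP e)) :=
  univ.filter (fun v => ∃ i, i < c ∧ v.val = a + d * i)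

lemma mem_aset {e a d c : ℕ} {v : Fin (nP e)} :
    v ∈ aset e a d c ↔ ∃ i, i < c ∧ v.val = a + d * i := by simp [aset]

def FoddS (e : ℕ) : Finset (Fin (nP e)) := aset e 1 2 e
def FevenS (e : ℕ) : Finset (Fin (nP e)) := aset e (KK e) 2 e
def WS (e : ℕ) : Finset (Fin (nP e)) := aset e (NP1 e) 2 (2*e-1)
def BeS (e : ℕ) : Finset (Fin (nP e)) := aset e (NP2 e) 2 e
def BoS (e : ℕ) : Finset (Fin (nP e)) := aset e (NP3 e) 2 e
def QhatS (e : ℕ) : Finset (Fin (nP e)) := aset e (NP4 e) 2 e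
def Ablock (e j : ℕ) : Finset (Fin (nP e)) := aset e (2*e*j) 2 e
def LinfGrp (e : ℕ) : Finset (Fin (nP e)) :=
  (univ.filter (fun v : Fin (nP e) => v.val = MP e)) ∪ aset e (astar e + 1) 2 (e-1)

lemma pool_mem_up {e : ℕ} {x z : Fin (nP e)} (hz : z.val < MP e) (h1 : x.val < z.val)
    (h2 : (z.val - x.val) % 2 = 1) : z ∈ pool e x := by
  rw [mem_pool]
  exact Or.inr ⟨hz, fun h => by rw [h] at h1; omega, by rw [dst_up hz h1]; exact h2⟩

lemma pool_mem_down {e : ℕ} {x z : Fin (nP e)} (hx : x.val < MP e) (h1 : z.val < x.val)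
    (h2 : (z.val + MP e - x.val) % 2 = 1) : z ∈ pool e x := by
  rw [mem_pool]
  exact Or.inr ⟨by omega, fun h => by rw [h] at h1; omega, by rw [dst_down hx h1]; exact h2⟩

lemma pool_mem_inf {e : ℕ} {x z : Fin (nP e)} (h : z.val = MP e) : z ∈ pool e x := by
  rw [mem_pool]; exact Or.inl h

lemma card_FoddS {e : ℕ} (he : 3 ≤ e) : (FoddS e).card = e := by
  have h := nums he
  exact card_valset 1 2 e (by omega) (by omega)

lemma card_FevenS {e : ℕ} (he : 3 ≤ e) : (FevenS e).card = e := by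
  have h := nums he
  exact card_valset (KK e) 2 e (by omega) (by omega)

lemma card_WS {e : ℕ} (he : 3 ≤ e) : (WS e).card = 2*e-1 := by
  have h := nums he
  exact card_valset (NP1 e) 2 (2*e-1) (by omega) (by omega)

lemma card_BeS {e : ℕ} (he : 3 ≤ e) : (BeS e).card = e := by
  have h := nums he
  exact card_valset (NP2 e) 2 e (by omega) (by omega)

lemma card_BoS {e : ℕ} (he : 3 ≤ e) : (BoS e).card = e := by
  have h := nums he
  exact card_valset (NP3 e) 2 e (by omega) (by omega)

lemma card_QhatS {e : ℕ} (he : 3 ≤ e) : (QhatS e).card = e := by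
  have h := nums he
  exact card_valset (NP4 e) 2 e (by omega) (by omega)

lemma card_Ablock {e j : ℕ} (he : 3 ≤ e) (hj : j < K e) : (Ablock e j).card = e := by
  have h := nums he
  have hb : 2*e*j + 2*e ≤ KK e := by
    have h1 : 2*e*(j+1) ≤ 2*e*(K e) := Nat.mul_le_mul_left _ (by omega)
    have h2 : 2*e*(j+1) = 2*e*j + 2*e := by ring
    have h3 : KK e = 2*e*(K e) := rfl
    omega
  exact card_valset (2*e*j) 2 e (by omega) (by omega)

lemma card_LinfGrp {e : ℕ} (he : 3 ≤ e) : (LinfGrp e).card = e := by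
  have h := nums he
  unfold LinfGrp
  rw [card_union_of_disjoint]
  · have c1 : (univ.filter (fun z : Fin (nP e) => z.val = MP e)).card = 1 := by
      rw [Finset.card_eq_one]
      refine ⟨⟨MP e, by omega⟩, ?_⟩
      ext z
      simp only [mem_filter, mem_univ, true_and, mem_singleton]
      exact ⟨fun hh => Fin.ext hh, fun hh => by rw [hh]⟩
    have c2 : (aset e (astar e + 1) 2 (e-1)).card = e-1 :=
      card_valset (astar e + 1) 2 (e-1) (by omega) (by omega)
    omega
  · rw [Finset.disjoint_left]
    intro z hz1 hz2
    simp only [mem_filter, mem_univ, true_and] at hz1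
    rw [mem_aset] at hz2
    obtain ⟨i, hi, hz⟩ := hz2
    omega

/-! ### The seed family -/

def VV (e : ℕ) : Finset (Finset (Fin (nP e))) := Finset.powersetCard e (WS e)

lemma VV_card {e : ℕ} (he : 3 ≤ e) : (VV e).card = K e := by
  rw [VV, card_powersetCard, card_WS he]; rfl

noncomputable def jof (e : ℕ) (V : {V // V ∈ VV e}) : ℕ := ((VV e).equivFin V).val

lemma jof_lt {e : ℕ} (he : 3 ≤ e) (V : {V // V ∈ VV e}) : jof e V < K e := by
  have h := ((VV e).equivFin V).isLt
  have h2 := VV_card he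
  unfold jof
  omega

lemma jof_inj {e : ℕ} {V V' : {V // V ∈ VV e}} (h : jof e V = jof e V') : V = V' := by
  have h2 : (VV e).equivFin V = (VV e).equivFin V' := Fin.ext h
  exact (VV e).equivFin.injective h2

noncomputable def AA (e : ℕ) : Finset (Finset (Fin (nP e))) :=
  (VV e).attach.image (fun V => Ablock e (jof e V))

noncomputable def Vof (e : ℕ) (x : Fin (nP e)) : Finset (Fin (nP e)) :=
  if h : x.val/2/e < (VV e).card
  then ((VV e).equivFin.symm ⟨x.val/2/e, h⟩ : {V // V ∈ VV e}).1 else ∅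

/-- For a vertex of `Ablock e j`, `Vof` recovers the `j`-th element of `VV`. -/
lemma Vof_eq {e : ℕ} (he : 3 ≤ e) {x : Fin (nP e)} {V : {V // V ∈ VV e}} {t : ℕ}
    (ht : t < e) (hx : x.val = 2*e*(jof e V) + 2*t) : Vof e x = V.1 := by
  have hdiv : x.val/2/e = jof e V := by
    have h1 : x.val = 2*(e*(jof e V) + t) := by rw [hx]; ring
    have h2 : x.val/2 = e*(jof e V) + t := by omega
    rw [h2, Nat.mul_add_div (by omega), Nat.div_eq_of_lt ht]
    omega
  have hlt : x.val/2/e < (VV e).card := by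
    rw [hdiv, VV_card he]; exact jof_lt he V
  unfold Vof
  rw [dif_pos hlt]
  congr 1
  have : (⟨x.val/2/e, hlt⟩ : Fin (VV e).card) = (VV e).equivFin V := by
    apply Fin.ext
    exact hdiv
  rw [this, Equiv.symm_apply_apply]

lemma Ablock_disj {e : ℕ} {j j' : ℕ} (h : j ≠ j') : Disjoint (Ablock e j) (Ablock e j') := by
  have key : ∀ a b : ℕ, a < b → Disjoint (Ablock e a) (Ablock e b) := by
    intro a b hab
    rw [Finset.disjoint_left]
    intro z hz hz'
    rw [Ablock, mem_aset] at hz hz'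
    obtain ⟨i, hi, hzi⟩ := hz
    obtain ⟨i', hi', hzi'⟩ := hz'
    have h1 : 2*e*(a+1) ≤ 2*e*b := Nat.mul_le_mul_left _ (by omega)
    have h2 : 2*e*(a+1) = 2*e*a + 2*e := by ring
    omega
  rcases Nat.lt_or_ge j j' with hlt | hge
  · exact key _ _ hlt
  · exact (key _ _ (by omega)).symm

lemma mem_AA {e : ℕ} {g : Finset (Fin (nP e))} :
    g ∈ AA e ↔ ∃ V : {V // V ∈ VV e}, g = Ablock e (jof e V) := by
  unfold AA
  simp only [mem_image, mem_attach, true_and]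
  constructor
  · rintro ⟨V, hV⟩; exact ⟨V, hV.symm⟩
  · rintro ⟨V, hV⟩; exact ⟨V, hV.symm⟩


/-! ### Gadget groups at each centre -/

noncomputable def gadgets (e : ℕ) (x : Fin (nP e)) : Finset (Finset (Fin (nP e))) :=
  if x.val < NP e then
    if x.val % 2 = 1 then
      (if x.val = astar e then {BeS e, LinfGrp e} else {BeS e})
    else if x.val < KK e then {Vof e x, QhatS e}
    else {BoS e}
  else
    if x.val % 2 = 1 then {FoddS e}
    else if NP2 e ≤ x.val ∧ x.val < NP2 e + 2*e then AA e
    else {FevenS e}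

lemma Vof_spec {e : ℕ} (he : 3 ≤ e) {x : Fin (nP e)} (hx : x.val < KK e) :
    Vof e x ∈ VV e := by
  have hKK : KK e = 2*(e*K e) := by unfold KK; ring
  have hlt : x.val/2/e < (VV e).card := by
    rw [VV_card he]
    rw [Nat.div_lt_iff_lt_mul (by omega)]
    have : K e * e = e * K e := Nat.mul_comm _ _
    omega
  unfold Vof
  rw [dif_pos hlt]
  exact Subtype.mem _

lemma BeS_sub_pool {e : ℕ} (he : 3 ≤ e) {x : Fin (nP e)} (hodd : x.val % 2 = 1)
    (hxN : x.val < NP e) : BeS e ⊆ pool e x := by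
  have h := nums he
  intro z hz
  rw [BeS, mem_aset] at hz
  obtain ⟨i, hi, hzv⟩ := hz
  exact pool_mem_up (by omega) (by omega) (by omega)

lemma LinfGrp_sub_pool {e : ℕ} (he : 3 ≤ e) {x : Fin (nP e)} (hx : x.val = astar e) :
    LinfGrp e ⊆ pool e x := by
  have h := nums he
  intro z hz
  rw [LinfGrp, mem_union] at hz
  rcases hz with hz | hz
  · simp only [mem_filter, mem_univ, true_and] at hz
    exact pool_mem_inf hz
  · rw [mem_aset] at hz
    obtain ⟨i, hi, hzv⟩ := hz
    exact pool_mem_up (by omega) (by omega) (by omega)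

lemma WS_sub_pool {e : ℕ} (he : 3 ≤ e) {x : Fin (nP e)} (heven : x.val % 2 = 0)
    (hxN : x.val < NP e) : WS e ⊆ pool e x := by
  have h := nums he
  intro z hz
  rw [WS, mem_aset] at hz
  obtain ⟨i, hi, hzv⟩ := hz
  exact pool_mem_up (by omega) (by omega) (by omega)

lemma QhatS_sub_pool {e : ℕ} (he : 3 ≤ e) {x : Fin (nP e)} (heven : x.val % 2 = 0)
    (hxN : x.val < NP e) : QhatS e ⊆ pool e x := by
  have h := nums he
  intro z hz
  rw [QhatS, mem_aset] at hz
  obtain ⟨i, hi, hzv⟩ := hz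
  exact pool_mem_up (by omega) (by omega) (by omega)

lemma BoS_sub_pool {e : ℕ} (he : 3 ≤ e) {x : Fin (nP e)} (heven : x.val % 2 = 0)
    (hxN : x.val < NP e) : BoS e ⊆ pool e x := by
  have h := nums he
  intro z hz
  rw [BoS, mem_aset] at hz
  obtain ⟨i, hi, hzv⟩ := hz
  exact pool_mem_up (by omega) (by omega) (by omega)

lemma FoddS_sub_pool {e : ℕ} (he : 3 ≤ e) {x : Fin (nP e)} (hodd : x.val % 2 = 1)
    (hxN : NP e ≤ x.val) (hxM : x.val < MP e) : FoddS e ⊆ pool e x := by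
  have h := nums he
  intro z hz
  rw [FoddS, mem_aset] at hz
  obtain ⟨i, hi, hzv⟩ := hz
  exact pool_mem_down hxM (by omega) (by omega)

lemma FevenS_sub_pool {e : ℕ} (he : 3 ≤ e) {x : Fin (nP e)} (heven : x.val % 2 = 0)
    (hxN : NP e ≤ x.val) (hxM : x.val < MP e) : FevenS e ⊆ pool e x := by
  have h := nums he
  intro z hz
  rw [FevenS, mem_aset] at hz
  obtain ⟨i, hi, hzv⟩ := hz
  exact pool_mem_down hxM (by omega) (by omega)

lemma Ablock_sub_pool {e : ℕ} (he : 3 ≤ e) {x : Fin (nP e)} (heven : x.val % 2 = 0)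
    (hxN : NP e ≤ x.val) (hxM : x.val < MP e) {j : ℕ} (hj : j < K e) :
    Ablock e j ⊆ pool e x := by
  have h := nums he
  have hb : 2*e*j + 2*e ≤ KK e := by
    have h1 : 2*e*(j+1) ≤ 2*e*(K e) := Nat.mul_le_mul_left _ (by omega)
    have h2 : 2*e*(j+1) = 2*e*j + 2*e := by ring
    have h3 : KK e = 2*e*(K e) := rfl
    omega
  have hsplit2 : 2*e*j = 2*(e*j) := by ring
  intro z hz
  rw [Ablock, mem_aset] at hz
  obtain ⟨i, hi, hzv⟩ := hz
  exact pool_mem_down hxM (by omega) (by omega)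

/-- Assembling gadget groups with a filler into a full partition of the pool. -/
lemma assemble {e : ℕ} (he : 3 ≤ e) (x : Fin (nP e)) (hx : x.val < MP e)
    (h1 : ∀ g ∈ gadgets e x, g.card = e)
    (h2 : ∀ g ∈ gadgets e x, g ⊆ pool e x)
    (h3 : ∀ g ∈ gadgets e x, ∃ z ∈ g, (z.val < NP e ↔ ¬(x.val < NP e)))
    (h4 : ∀ g₁ ∈ gadgets e x, ∀ g₂ ∈ gadgets e x, g₁ ≠ g₂ → Disjoint g₁ g₂)
    (h5 : (gadgets e x).card ≤ K e + 2) :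
    ∃ P : Finset (Finset (Fin (nP e))),
      (∀ g ∈ P, g.card = e) ∧ (∀ g ∈ P, ∃ z ∈ g, (z.val < NP e ↔ ¬(x.val < NP e))) ∧
      (∀ g₁ ∈ P, ∀ g₂ ∈ P, g₁ ≠ g₂ → Disjoint g₁ g₂) ∧
      P.biUnion id = pool e x ∧ gadgets e x ⊆ P := by
  have hnum := numMain he (g := (gadgets e x).card) h5
  set G := gadgets e x with hG
  set U := G.biUnion id with hU
  have hUsub : U ⊆ pool e x := by
    intro a ha
    rw [hU, mem_biUnion] at ha
    obtain ⟨g, hg, hag⟩ := ha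
    exact h2 g hg hag
  have hUcard : U.card = e * G.card := by
    rw [hU, Finset.card_biUnion (t := id) (fun a ha b hb hab => h4 a ha b hb hab)]
    simp only [id_eq]
    rw [Finset.sum_const_nat (fun g hg => h1 g hg)]
    ring
  set R := pool e x \ U with hR
  have hpoolc := card_pool he hx
  have hNPe : NP e = e * mP e := rfl
  have hmulsub : e * (mP e - G.card) + e * G.card = e * mP e := by
    rw [← Nat.mul_add]
    congr 1
    omega
  have hRcard : R.card = e * (mP e - G.card) := by
    rw [hR, card_sdiff_of_subset hUsub, hpoolc, hUcard]
    omega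
  have hfilter : (R.filter (fun z => (z.val < NP e ↔ x.val < NP e))).card
      ≤ (mP e - G.card) * (e - 1) := by
    have hsc := scount_le he hx
    have hsub : R.filter (fun z => (z.val < NP e ↔ x.val < NP e))
        ⊆ (pool e x).filter (fun z => (z.val < NP e ↔ x.val < NP e)) := by
      apply filter_subset_filter
      rw [hR]
      exact sdiff_subset
    have := card_le_card hsub
    omega
  obtain ⟨Q, hQ1, hQ2, hQ3, hQ4⟩ := lemA (e := e) (by omega)
    (fun z : Fin (nP e) => (z.val < NP e ↔ x.val < NP e)) (mP e - G.card) R hRcard hfilter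
  have hQsubR : ∀ g ∈ Q, g ⊆ R := by
    intro g hg a ha
    rw [← hQ4]
    exact mem_biUnion.mpr ⟨g, hg, ha⟩
  refine ⟨G ∪ Q, ?_, ?_, ?_, ?_, subset_union_left⟩
  · intro g hg
    rcases mem_union.mp hg with h | h
    · exact h1 g h
    · exact hQ1 g h
  · intro g hg
    rcases mem_union.mp hg with h | h
    · exact h3 g h
    · obtain ⟨z, hz, hnz⟩ := hQ2 g h
      exact ⟨z, hz, by tauto⟩
  · intro g₁ hg₁ g₂ hg₂ hne
    have hdisjRU : Disjoint U R := by
      rw [hR]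
      exact Finset.disjoint_sdiff
    rcases mem_union.mp hg₁ with ha | ha <;> rcases mem_union.mp hg₂ with hb | hb
    · exact h4 g₁ ha g₂ hb hne
    · exact Finset.disjoint_of_subset_left (subset_biUnion_of_mem id ha)
        (Finset.disjoint_of_subset_right (hQsubR _ hb) hdisjRU)
    · exact (Finset.disjoint_of_subset_left (subset_biUnion_of_mem id hb)
        (Finset.disjoint_of_subset_right (hQsubR _ ha) hdisjRU)).symm
    · exact hQ3 g₁ ha g₂ hb hne
  · have hsplit : (G ∪ Q).biUnion id = G.biUnion id ∪ Q.biUnion id := by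
      ext a
      simp only [mem_biUnion, mem_union]
      constructor
      · rintro ⟨g, hg | hg, hag⟩
        · exact Or.inl ⟨g, hg, hag⟩
        · exact Or.inr ⟨g, hg, hag⟩
      · rintro (⟨g, hg, hag⟩ | ⟨g, hg, hag⟩)
        · exact ⟨g, Or.inl hg, hag⟩
        · exact ⟨g, Or.inr hg, hag⟩
    rw [hsplit, hQ4, ← hU, hR]
    exact union_sdiff_of_subset hUsub


lemma disj_BeS_Linf {e : ℕ} (he : 3 ≤ e) : Disjoint (BeS e) (LinfGrp e) := by
  have h := nums he
  rw [Finset.disjoint_left]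
  intro z hz1 hz2
  rw [BeS, mem_aset] at hz1
  obtain ⟨i, hi, hzv⟩ := hz1
  rw [LinfGrp, mem_union] at hz2
  rcases hz2 with hz2 | hz2
  · simp only [mem_filter, mem_univ, true_and] at hz2
    omega
  · rw [mem_aset] at hz2
    obtain ⟨i', hi', hzv'⟩ := hz2
    omega

lemma disj_WS_Qhat {e : ℕ} (he : 3 ≤ e) : Disjoint (WS e) (QhatS e) := by
  have h := nums he
  rw [Finset.disjoint_left]
  intro z hz1 hz2
  rw [WS, mem_aset] at hz1
  rw [QhatS, mem_aset] at hz2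
  obtain ⟨i, hi, hzv⟩ := hz1
  obtain ⟨i', hi', hzv'⟩ := hz2
  omega

/-- Existence of a full partition of the pool extending the gadget groups. -/
lemma exists_pspec {e : ℕ} (he : 3 ≤ e) (x : Fin (nP e)) (hx : x.val < MP e) :
    ∃ P : Finset (Finset (Fin (nP e))),
      (∀ g ∈ P, g.card = e) ∧ (∀ g ∈ P, ∃ z ∈ g, (z.val < NP e ↔ ¬(x.val < NP e))) ∧
      (∀ g₁ ∈ P, ∀ g₂ ∈ P, g₁ ≠ g₂ → Disjoint g₁ g₂) ∧
      P.biUnion id = pool e x ∧ gadgets e x ⊆ P := by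
  have hnum := nums he
  have hK := K_pos he
  by_cases ha : x.val < NP e
  · by_cases hb : x.val % 2 = 1
    · by_cases hc : x.val = astar e
      · -- {BeS, LinfGrp}
        have hGeq : gadgets e x = {BeS e, LinfGrp e} := by
          unfold gadgets; rw [if_pos ha, if_pos hb, if_pos hc]
        refine assemble he x hx ?_ ?_ ?_ ?_ ?_ <;> rw [hGeq]
        · intro g hg
          rcases mem_insert.mp hg with rfl | hg
          · exact card_BeS he
          · rw [mem_singleton] at hg; subst hg; exact card_LinfGrp he
        · intro g hg
          rcases mem_insert.mp hg with rfl | hg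
          · exact BeS_sub_pool he hb ha
          · rw [mem_singleton] at hg; subst hg; exact LinfGrp_sub_pool he hc
        · intro g hg
          rcases mem_insert.mp hg with rfl | hg
          · refine ⟨⟨NP2 e, by omega⟩, ?_, by simp; omega⟩
            rw [BeS, mem_aset]
            exact ⟨0, by omega, by simp⟩
          · rw [mem_singleton] at hg; subst hg
            refine ⟨⟨MP e, by omega⟩, ?_, by simp; omega⟩
            rw [LinfGrp, mem_union]
            left
            simp
        · intro g₁ hg₁ g₂ hg₂ hne
          rcases mem_insert.mp hg₁ with rfl | hg₁ <;> rcases mem_insert.mp hg₂ with rfl | hg₂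
          · exact absurd rfl hne
          · rw [mem_singleton] at hg₂; subst hg₂; exact disj_BeS_Linf he
          · rw [mem_singleton] at hg₁; subst hg₁; exact (disj_BeS_Linf he).symm
          · rw [mem_singleton] at hg₁ hg₂; subst hg₁; subst hg₂; exact absurd rfl hne
        · have h1 := card_insert_le (BeS e) ({LinfGrp e} : Finset (Finset (Fin (nP e))))
          have h2 : ({LinfGrp e} : Finset (Finset (Fin (nP e)))).card = 1 := card_singleton _
          omega
      · -- {BeS}
        have hGeq : gadgets e x = {BeS e} := by
          unfold gadgets; rw [if_pos ha, if_pos hb, if_neg hc]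
        refine assemble he x hx ?_ ?_ ?_ ?_ ?_ <;> rw [hGeq]
        · intro g hg; rw [mem_singleton] at hg; subst hg; exact card_BeS he
        · intro g hg; rw [mem_singleton] at hg; subst hg; exact BeS_sub_pool he hb ha
        · intro g hg; rw [mem_singleton] at hg; subst hg
          refine ⟨⟨NP2 e, by omega⟩, ?_, by simp; omega⟩
          rw [BeS, mem_aset]
          exact ⟨0, by omega, by simp⟩
        · intro g₁ hg₁ g₂ hg₂ hne
          rw [mem_singleton] at hg₁ hg₂; subst hg₁; subst hg₂; exact absurd rfl hne
        · rw [card_singleton]; omega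
    · by_cases hc : x.val < KK e
      · -- {Vof x, QhatS}
        have hGeq : gadgets e x = {Vof e x, QhatS e} := by
          unfold gadgets; rw [if_pos ha, if_neg hb, if_pos hc]
        have hV := Vof_spec he hc
        rw [VV, mem_powersetCard] at hV
        obtain ⟨hVsub, hVcard⟩ := hV
        refine assemble he x hx ?_ ?_ ?_ ?_ ?_ <;> rw [hGeq]
        · intro g hg
          rcases mem_insert.mp hg with rfl | hg
          · exact hVcard
          · rw [mem_singleton] at hg; subst hg; exact card_QhatS he
        · intro g hg
          rcases mem_insert.mp hg with rfl | hg
          · exact hVsub.trans (WS_sub_pool he (by omega) ha)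
          · rw [mem_singleton] at hg; subst hg; exact QhatS_sub_pool he (by omega) ha
        · intro g hg
          rcases mem_insert.mp hg with rfl | hg
          · have hne : (Vof e x).Nonempty := by rw [← card_pos, hVcard]; omega
            obtain ⟨z, hz⟩ := hne
            have hzW := hVsub hz
            rw [WS, mem_aset] at hzW
            obtain ⟨i, hi, hzv⟩ := hzW
            exact ⟨z, hz, by omega⟩
          · rw [mem_singleton] at hg; subst hg
            refine ⟨⟨NP4 e, by omega⟩, ?_, by simp; omega⟩
            rw [QhatS, mem_aset]
            exact ⟨0, by omega, by simp⟩
        · intro g₁ hg₁ g₂ hg₂ hne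
          rcases mem_insert.mp hg₁ with rfl | hg₁ <;> rcases mem_insert.mp hg₂ with rfl | hg₂
          · exact absurd rfl hne
          · rw [mem_singleton] at hg₂; subst hg₂
            exact Finset.disjoint_of_subset_left hVsub (disj_WS_Qhat he)
          · rw [mem_singleton] at hg₁; subst hg₁
            exact (Finset.disjoint_of_subset_left hVsub (disj_WS_Qhat he)).symm
          · rw [mem_singleton] at hg₁ hg₂; subst hg₁; subst hg₂; exact absurd rfl hne
        · have h1 := card_insert_le (Vof e x) ({QhatS e} : Finset (Finset (Fin (nP e))))
          have h2 : ({QhatS e} : Finset (Finset (Fin (nP e)))).card = 1 := card_singleton _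
          omega
      · -- {BoS}
        have hGeq : gadgets e x = {BoS e} := by
          unfold gadgets; rw [if_pos ha, if_neg hb, if_neg hc]
        refine assemble he x hx ?_ ?_ ?_ ?_ ?_ <;> rw [hGeq]
        · intro g hg; rw [mem_singleton] at hg; subst hg; exact card_BoS he
        · intro g hg; rw [mem_singleton] at hg; subst hg; exact BoS_sub_pool he (by omega) ha
        · intro g hg; rw [mem_singleton] at hg; subst hg
          refine ⟨⟨NP3 e, by omega⟩, ?_, by simp; omega⟩
          rw [BoS, mem_aset]
          exact ⟨0, by omega, by simp⟩
        · intro g₁ hg₁ g₂ hg₂ hne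
          rw [mem_singleton] at hg₁ hg₂; subst hg₁; subst hg₂; exact absurd rfl hne
        · rw [card_singleton]; omega
  · by_cases hb : x.val % 2 = 1
    · -- {FoddS}
      have hGeq : gadgets e x = {FoddS e} := by
        unfold gadgets; rw [if_neg ha, if_pos hb]
      refine assemble he x hx ?_ ?_ ?_ ?_ ?_ <;> rw [hGeq]
      · intro g hg; rw [mem_singleton] at hg; subst hg; exact card_FoddS he
      · intro g hg; rw [mem_singleton] at hg; subst hg
        exact FoddS_sub_pool he hb (by omega) hx
      · intro g hg; rw [mem_singleton] at hg; subst hg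
        refine ⟨⟨1, by omega⟩, ?_, by simp; omega⟩
        rw [FoddS, mem_aset]
        exact ⟨0, by omega, by simp⟩
      · intro g₁ hg₁ g₂ hg₂ hne
        rw [mem_singleton] at hg₁ hg₂; subst hg₁; subst hg₂; exact absurd rfl hne
      · rw [card_singleton]; omega
    · by_cases hc : NP2 e ≤ x.val ∧ x.val < NP2 e + 2*e
      · -- AA
        have hGeq : gadgets e x = AA e := by
          unfold gadgets; rw [if_neg ha, if_neg hb, if_pos hc]
        refine assemble he x hx ?_ ?_ ?_ ?_ ?_ <;> rw [hGeq]
        · intro g hg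
          obtain ⟨V, rfl⟩ := mem_AA.mp hg
          exact card_Ablock he (jof_lt he V)
        · intro g hg
          obtain ⟨V, rfl⟩ := mem_AA.mp hg
          exact Ablock_sub_pool he (by omega) (by omega) hx (jof_lt he V)
        · intro g hg
          obtain ⟨V, rfl⟩ := mem_AA.mp hg
          have hj := jof_lt he V
          have hbd : 2*e*(jof e V) + 2*e ≤ KK e := by
            have h1 : 2*e*(jof e V + 1) ≤ 2*e*(K e) := Nat.mul_le_mul_left _ (by omega)
            have h2 : 2*e*(jof e V + 1) = 2*e*(jof e V) + 2*e := by ring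
            have h3 : KK e = 2*e*(K e) := rfl
            omega
          refine ⟨⟨2*e*(jof e V), by omega⟩, ?_, by simp; omega⟩
          rw [Ablock, mem_aset]
          exact ⟨0, by omega, by simp⟩
        · intro g₁ hg₁ g₂ hg₂ hne
          obtain ⟨V₁, rfl⟩ := mem_AA.mp hg₁
          obtain ⟨V₂, rfl⟩ := mem_AA.mp hg₂
          apply Ablock_disj
          intro hj
          exact hne (by rw [hj])
        · calc (AA e).card ≤ (VV e).attach.card := card_image_le
            _ = K e := by rw [card_attach, VV_card he]
            _ ≤ K e + 2 := by omega
      · -- {FevenS}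
        have hGeq : gadgets e x = {FevenS e} := by
          unfold gadgets; rw [if_neg ha, if_neg hb, if_neg hc]
        refine assemble he x hx ?_ ?_ ?_ ?_ ?_ <;> rw [hGeq]
        · intro g hg; rw [mem_singleton] at hg; subst hg; exact card_FevenS he
        · intro g hg; rw [mem_singleton] at hg; subst hg
          exact FevenS_sub_pool he (by omega) (by omega) hx
        · intro g hg; rw [mem_singleton] at hg; subst hg
          refine ⟨⟨KK e, by omega⟩, ?_, by simp; omega⟩
          rw [FevenS, mem_aset]
          exact ⟨0, by omega, by simp⟩
        · intro g₁ hg₁ g₂ hg₂ hne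
          rw [mem_singleton] at hg₁ hg₂; subst hg₁; subst hg₂; exact absurd rfl hne
        · rw [card_singleton]; omega


/-! ### The star system -/

noncomputable def Parts (e : ℕ) (he : 3 ≤ e) (x : Fin (nP e)) : Finset (Finset (Fin (nP e))) :=
  if hx : x.val < MP e then (exists_pspec he x hx).choose else ∅

lemma Parts_spec {e : ℕ} (he : 3 ≤ e) {x : Fin (nP e)} (hx : x.val < MP e) :
    (∀ g ∈ Parts e he x, g.card = e) ∧
    (∀ g ∈ Parts e he x, ∃ z ∈ g, (z.val < NP e ↔ ¬(x.val < NP e))) ∧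
    (∀ g₁ ∈ Parts e he x, ∀ g₂ ∈ Parts e he x, g₁ ≠ g₂ → Disjoint g₁ g₂) ∧
    (Parts e he x).biUnion id = pool e x ∧ gadgets e x ⊆ Parts e he x := by
  unfold Parts
  rw [dif_pos hx]
  exact (exists_pspec he x hx).choose_spec

lemma Parts_sub_pool {e : ℕ} (he : 3 ≤ e) {x : Fin (nP e)} (hx : x.val < MP e)
    {g : Finset (Fin (nP e))} (hg : g ∈ Parts e he x) : g ⊆ pool e x := by
  intro a ha
  rw [← (Parts_spec he hx).2.2.2.1]
  exact mem_biUnion.mpr ⟨g, hg, ha⟩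

lemma Parts_not_centre {e : ℕ} (he : 3 ≤ e) {x : Fin (nP e)} (hx : x.val < MP e)
    {g : Finset (Fin (nP e))} (hg : g ∈ Parts e he x) : x ∉ g :=
  fun hxg => not_mem_pool_self hx (Parts_sub_pool he hx hg hxg)

lemma EStar.ext' {n e : ℕ} {S T : EStar n e} (h1 : S.centre = T.centre)
    (h2 : S.leaves = T.leaves) : S = T := by
  cases S; cases T
  simp only at h1 h2
  subst h1; subst h2
  rfl

noncomputable def stars (e : ℕ) (he : 3 ≤ e) : Finset (EStar (nP e) e) :=
  univ.biUnion (fun x =>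
    if hx : x.val < MP e then
      (Parts e he x).attach.image (fun g =>
        ⟨x, g.1, (Parts_spec he hx).1 g.1 g.2, Parts_not_centre he hx g.2⟩)
    else ∅)

lemma mem_stars {e : ℕ} (he : 3 ≤ e) {S : EStar (nP e) e} :
    S ∈ stars e he ↔ S.centre.val < MP e ∧ S.leaves ∈ Parts e he S.centre := by
  unfold stars
  simp only [mem_biUnion, mem_univ, true_and]
  constructor
  · rintro ⟨x, hx⟩
    by_cases h : x.val < MP e
    · rw [dif_pos h] at hx
      simp only [mem_image, mem_attach, true_and] at hx
      obtain ⟨g, hg⟩ := hx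
      rw [← hg]
      exact ⟨h, g.2⟩
    · rw [dif_neg h] at hx
      exact absurd hx (notMem_empty _)
  · rintro ⟨hc, hl⟩
    refine ⟨S.centre, ?_⟩
    rw [dif_pos hc]
    simp only [mem_image, mem_attach, true_and]
    exact ⟨⟨S.leaves, hl⟩, EStar.ext' rfl rfl⟩

lemma mem_stars_mk {e : ℕ} (he : 3 ≤ e) {x : Fin (nP e)} (hx : x.val < MP e)
    {g : Finset (Fin (nP e))} (hg : g ∈ Parts e he x) :
    (⟨x, g, (Parts_spec he hx).1 g hg, Parts_not_centre he hx hg⟩ : EStar (nP e) e)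
      ∈ stars e he := by
  rw [mem_stars he]
  exact ⟨hx, hg⟩

lemma edge_analysis {e : ℕ} {S : EStar (nP e) e} {u v : Fin (nP e)}
    (hp : s(u, v) ∈ EStar.edges S) :
    (S.centre = u ∧ v ∈ S.leaves) ∨ (S.centre = v ∧ u ∈ S.leaves) := by
  unfold EStar.edges at hp
  rw [mem_image] at hp
  obtain ⟨a, ha, heq⟩ := hp
  rw [Sym2.eq_iff] at heq
  rcases heq with ⟨h1, h2⟩ | ⟨h1, h2⟩
  · exact Or.inl ⟨h1, h2 ▸ ha⟩
  · exact Or.inr ⟨h1, h2 ▸ ha⟩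

lemma pool_ne {e : ℕ} {x z : Fin (nP e)} (hx : x.val < MP e) (hz : z ∈ pool e x) : z ≠ x := by
  rw [mem_pool] at hz
  rcases hz with h | ⟨-, h, -⟩
  · intro hc; rw [hc] at h; omega
  · exact h

lemma exists_unique_star {e : ℕ} (he : 3 ≤ e) {x z : Fin (nP e)} (hx : x.val < MP e)
    (hz : z ∈ pool e x)
    (hcentre : ∀ S : EStar (nP e) e, S ∈ stars e he → s(x, z) ∈ EStar.edges S →
      S.centre = x) :
    ∃! S, S ∈ stars e he ∧ s(x, z) ∈ EStar.edges S := by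
  have hcover := (Parts_spec he hx).2.2.2.1
  have hzg : ∃ g ∈ Parts e he x, z ∈ g := by
    have : z ∈ (Parts e he x).biUnion id := by rw [hcover]; exact hz
    simpa using mem_biUnion.mp this
  obtain ⟨g, hg, hzg⟩ := hzg
  have hzx := pool_ne hx hz
  refine ⟨⟨x, g, (Parts_spec he hx).1 g hg, Parts_not_centre he hx hg⟩,
    ⟨mem_stars_mk he hx hg, ?_⟩, ?_⟩
  · unfold EStar.edges
    rw [mem_image]
    exact ⟨z, hzg, rfl⟩
  · rintro S' ⟨hS', hp'⟩
    have hc := hcentre S' hS' hp'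
    have hleaf : z ∈ S'.leaves := by
      rcases edge_analysis hp' with ⟨-, h⟩ | ⟨h1, -⟩
      · exact h
      · exact absurd (hc ▸ h1 : (x : Fin (nP e)) = z) (Ne.symm hzx)
    have hPl : S'.leaves ∈ Parts e he x := by
      have := (mem_stars he).mp hS'
      rw [hc] at this
      exact this.2
    have hgeq : S'.leaves = g := by
      by_contra hne
      have hdisj := (Parts_spec he hx).2.2.1 S'.leaves hPl g hg hne
      exact (Finset.disjoint_left.mp hdisj hleaf) hzg
    exact EStar.ext' hc hgeq

lemma partition_main {e : ℕ} (he : 3 ≤ e) :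
    ∀ p : Sym2 (Fin (nP e)), ¬ p.IsDiag →
      ∃! S, S ∈ stars e he ∧ p ∈ EStar.edges S := by
  have hnum := nums he
  intro p hdiag
  induction p with
  | _ u v =>
  rw [Sym2.mk_isDiag_iff] at hdiag
  have huv : u.val ≠ v.val := fun h => hdiag (Fin.ext h)
  have hu := val_lt_n he u
  have hv := val_lt_n he v
  by_cases hvM : v.val = MP e
  · -- v is the infinite vertex, centre u
    have hxM : u.val < MP e := by omega
    apply exists_unique_star he hxM (pool_mem_inf hvM)
    intro S hS hp
    rcases edge_analysis hp with ⟨h, -⟩ | ⟨h, -⟩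
    · exact h
    · have := ((mem_stars he).mp hS).1
      rw [h] at this
      omega
  · by_cases huM : u.val = MP e
    · have hxM : v.val < MP e := by omega
      have hswap : s(u, v) = s(v, u) := Sym2.eq_swap
      rw [hswap]
      apply exists_unique_star he hxM (pool_mem_inf huM)
      intro S hS hp
      rcases edge_analysis hp with ⟨h, -⟩ | ⟨h, -⟩
      · exact h
      · have := ((mem_stars he).mp hS).1
        rw [h] at this
        omega
    · -- both finite
      have huM' : u.val < MP e := by omega
      have hvM' : v.val < MP e := by omega
      by_cases hpar : v ∈ pool e u
      · apply exists_unique_star he huM' hpar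
        intro S hS hp
        rcases edge_analysis hp with ⟨h, -⟩ | ⟨h, hleaf⟩
        · exact h
        · exfalso
          have hSc := (mem_stars he).mp hS
          have hupool : u ∈ pool e v := by
            have := Parts_sub_pool he (h ▸ hSc.1) (h ▸ hSc.2)
            exact this hleaf
          exact ((pool_excl he huM' hvM' hdiag).mp hpar) hupool
      · have hpar2 : u ∈ pool e v := by
          by_contra hc
          exact hpar ((pool_excl he huM' hvM' hdiag).mpr hc)
        have hswap : s(u, v) = s(v, u) := Sym2.eq_swap
        rw [hswap]
        apply exists_unique_star he hvM' hpar2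
        intro S hS hp
        rcases edge_analysis hp with ⟨h, -⟩ | ⟨h, hleaf⟩
        · exact h
        · exfalso
          have hSc := (mem_stars he).mp hS
          have hvpool : v ∈ pool e u := by
            have := Parts_sub_pool he (h ▸ hSc.1) (h ▸ hSc.2)
            exact this hleaf
          exact hpar hvpool

noncomputable def sys (e : ℕ) (he : 3 ≤ e) : EStarSystem (nP e) e where
  stars := stars e he
  partition := partition_main he


/-! ### Colourings -/

def othr (γ : Fin 2) : Fin 2 := if γ = 0 then 1 else 0

lemma othr_spec : ∀ a b : Fin 2, a ≠ b → a = othr b := by decide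
lemma othr_othr : ∀ b : Fin 2, othr (othr b) = b := by decide
lemma othr_ne : ∀ b : Fin 2, othr b ≠ b := by decide

def cpat (e : ℕ) (δ : Fin 2) : Fin (nP e) → Fin 2 :=
  fun v => if v.val < NP e then δ else othr δ

lemma weak_cpat {e : ℕ} (he : 3 ≤ e) (δ : Fin 2) :
    IsWeakColouring (sys e he) (cpat e δ) := by
  intro S hS
  rw [show (sys e he).stars = stars e he from rfl, mem_stars he] at hS
  obtain ⟨hx, hl⟩ := hS
  obtain ⟨z, hzg, hiff⟩ := (Parts_spec he hx).2.1 _ hl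
  refine ⟨z, hzg, ?_⟩
  unfold cpat
  by_cases h : S.centre.val < NP e
  · rw [if_pos h, if_neg (by tauto)]
    exact othr_ne δ
  · rw [if_neg h, if_pos (by tauto)]
    intro hc
    exact othr_ne δ hc.symm

lemma equit {e : ℕ} (he : 3 ≤ e) :
    ∀ i : Fin 2, classCard (cpat e 0) i = nP e / 2 := by
  have hnum := nums he
  have h0 : (univ.filter (fun v : Fin (nP e) => v.val < NP e)).card = NP e :=
    card_val_lt (NP e) (by omega)
  have htot : (univ : Finset (Fin (nP e))).card = nP e := by
    rw [card_univ, Fintype.card_fin]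
  have hsplit := card_filter_add_card_filter_not
    (s := (univ : Finset (Fin (nP e)))) (p := fun v => v.val < NP e)
  intro i
  fin_cases i
  · show classCard (cpat e 0) 0 = nP e / 2
    unfold classCard
    have heq : (univ.filter (fun v : Fin (nP e) => cpat e 0 v = 0))
        = univ.filter (fun v : Fin (nP e) => v.val < NP e) := by
      apply filter_congr
      intro v _
      unfold cpat
      constructor
      · intro hv
        by_contra hcon
        rw [if_neg hcon] at hv
        exact (by decide : othr (0:Fin 2) ≠ 0) hv
      · intro hv
        rw [if_pos hv]
    rw [heq, h0]
    omega
  · show classCard (cpat e 0) 1 = nP e / 2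
    unfold classCard
    have heq : (univ.filter (fun v : Fin (nP e) => cpat e 0 v = 1))
        = univ.filter (fun v : Fin (nP e) => ¬ v.val < NP e) := by
      apply filter_congr
      intro v _
      unfold cpat
      constructor
      · intro hv hcon
        rw [if_pos hcon] at hv
        exact (by decide : (0:Fin 2) ≠ 1) hv
      · intro hv
        rw [if_neg hv]
        decide
    rw [heq]
    omega

lemma not1 {e : ℕ} (he : 3 ≤ e) : ¬ Colourable (sys e he) 1 := by
  have hnum := nums he
  rintro ⟨c, hw⟩
  have hdiag : ¬ (s((⟨0, by omega⟩ : Fin (nP e)), (⟨MP e, by omega⟩ : Fin (nP e)))).IsDiag := by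
    rw [Sym2.mk_isDiag_iff]
    intro h
    have := congrArg Fin.val h
    simp at this
    omega
  obtain ⟨S, ⟨hS, -⟩, -⟩ := (sys e he).partition _ hdiag
  obtain ⟨a, -, hne⟩ := hw S hS
  exact hne (Subsingleton.elim _ _)

/-! ### Forcing chain -/

lemma constraint {e : ℕ} (he : 3 ≤ e) {c : Fin (nP e) → Fin 2}
    (hw : IsWeakColouring (sys e he) c) {x : Fin (nP e)} (hx : x.val < MP e)
    {g : Finset (Fin (nP e))} (hg : g ∈ Parts e he x) {γ : Fin 2}
    (hall : ∀ z ∈ g, c z = γ) : c x ≠ γ := by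
  obtain ⟨a, ha, hne⟩ := hw _ (mem_stars_mk he hx hg)
  intro hcx
  exact hne (by rw [hall a ha, hcx])

lemma gadget_in_parts {e : ℕ} (he : 3 ≤ e) {x : Fin (nP e)} (hx : x.val < MP e)
    {g : Finset (Fin (nP e))} (hg : g ∈ gadgets e x) : g ∈ Parts e he x :=
  (Parts_spec he hx).2.2.2.2 hg

lemma BeS_in_gadgets {e : ℕ} {x : Fin (nP e)} (ha : x.val < NP e) (hb : x.val % 2 = 1) :
    BeS e ∈ gadgets e x := by
  unfold gadgets
  rw [if_pos ha, if_pos hb]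
  split_ifs
  · exact mem_insert_self _ _
  · exact mem_singleton_self _

lemma Linf_in_gadgets {e : ℕ} (he : 3 ≤ e) {x : Fin (nP e)} (ha : x.val = astar e) :
    LinfGrp e ∈ gadgets e x := by
  have hnum := nums he
  unfold gadgets
  rw [if_pos (by omega), if_pos (by omega), if_pos ha]
  exact mem_insert_of_mem (mem_singleton_self _)

lemma Vof_in_gadgets {e : ℕ} {x : Fin (nP e)} (ha : x.val < NP e) (hb : x.val % 2 = 0)
    (hc : x.val < KK e) : Vof e x ∈ gadgets e x := by
  unfold gadgets
  rw [if_pos ha, if_neg (by omega), if_pos hc]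
  exact mem_insert_self _ _

lemma Qhat_in_gadgets {e : ℕ} {x : Fin (nP e)} (ha : x.val < NP e) (hb : x.val % 2 = 0)
    (hc : x.val < KK e) : QhatS e ∈ gadgets e x := by
  unfold gadgets
  rw [if_pos ha, if_neg (by omega), if_pos hc]
  exact mem_insert_of_mem (mem_singleton_self _)

lemma BoS_in_gadgets {e : ℕ} {x : Fin (nP e)} (ha : x.val < NP e) (hb : x.val % 2 = 0)
    (hc : ¬ x.val < KK e) : BoS e ∈ gadgets e x := by
  unfold gadgets
  rw [if_pos ha, if_neg (by omega), if_neg hc]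
  exact mem_singleton_self _

lemma Fodd_in_gadgets {e : ℕ} {x : Fin (nP e)} (ha : ¬ x.val < NP e) (hb : x.val % 2 = 1) :
    FoddS e ∈ gadgets e x := by
  unfold gadgets
  rw [if_neg ha, if_pos hb]
  exact mem_singleton_self _

lemma Ablock_in_gadgets {e : ℕ} {x : Fin (nP e)} (ha : ¬ x.val < NP e) (hb : x.val % 2 = 0)
    (hc : NP2 e ≤ x.val ∧ x.val < NP2 e + 2*e) (V : {V // V ∈ VV e}) :
    Ablock e (jof e V) ∈ gadgets e x := by
  unfold gadgets
  rw [if_neg ha, if_neg (by omega), if_pos hc]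
  exact mem_AA.mpr ⟨V, rfl⟩

lemma Feven_in_gadgets {e : ℕ} {x : Fin (nP e)} (ha : ¬ x.val < NP e) (hb : x.val % 2 = 0)
    (hc : ¬ (NP2 e ≤ x.val ∧ x.val < NP2 e + 2*e)) : FevenS e ∈ gadgets e x := by
  unfold gadgets
  rw [if_neg ha, if_neg (by omega), if_neg hc]
  exact mem_singleton_self _

/-- Every weak 2-colouring is one of the two patterns. -/
lemma force {e : ℕ} (he : 3 ≤ e) {c : Fin (nP e) → Fin 2}
    (hw : IsWeakColouring (sys e he) c) : ∃ δ : Fin 2, c = cpat e δ := by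
  have hnum := nums he
  have hK := K_pos he
  -- Step 0 : pigeonhole on WS
  obtain ⟨δB, hδB⟩ : ∃ δB : Fin 2, e ≤ ((WS e).filter (fun w => c w = δB)).card := by
    have hWcard := card_WS he
    have hsplit := card_filter_add_card_filter_not (s := WS e)
      (p := fun w => c w = 0)
    by_cases h : e ≤ ((WS e).filter (fun w => c w = 0)).card
    · exact ⟨0, h⟩
    · refine ⟨1, ?_⟩
      have heq : (WS e).filter (fun w => ¬ c w = 0) = (WS e).filter (fun w => c w = 1) := by
        apply filter_congr
        intro w _
        constructor
        · intro h2
          have : ∀ a : Fin 2, ¬ a = 0 → a = 1 := by decide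
          exact this _ h2
        · intro h2
          rw [h2]
          decide
      rw [heq] at hsplit
      omega
  obtain ⟨V, hVsub, hVcard⟩ := Finset.exists_subset_card_eq hδB
  have hV : V ∈ VV e := by
    rw [VV, mem_powersetCard]
    exact ⟨hVsub.trans (filter_subset _ _), hVcard⟩
  have hVall : ∀ w ∈ V, c w = δB := by
    intro w hwv
    have := hVsub hwv
    rw [mem_filter] at this
    exact this.2
  set Vs : {V // V ∈ VV e} := ⟨V, hV⟩ with hVs
  set j := jof e Vs with hj
  set δA := othr δB with hδA
  have hjK := jof_lt he Vs
  have hbd : 2*e*j + 2*e ≤ KK e := by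
    have h1 : 2*e*(j+1) ≤ 2*e*(K e) := Nat.mul_le_mul_left _ (by omega)
    have h2 : 2*e*(j+1) = 2*e*j + 2*e := by ring
    have h3 : KK e = 2*e*(K e) := rfl
    omega
  have h2ej : 2*e*j = 2*(e*j) := by ring
  -- Step 1 : the block attached to V* is δA
  have hAb : ∀ z ∈ Ablock e j, c z = δA := by
    intro z hz
    rw [Ablock, mem_aset] at hz
    obtain ⟨t, ht, hzv⟩ := hz
    have hzNP : z.val < NP e := by omega
    have hzKK : z.val < KK e := by omega
    have hzM : z.val < MP e := by omega
    have hVofz : Vof e z = V := Vof_eq he ht (by rw [← hj]; exact hzv)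
    have hmem : V ∈ gadgets e z := by
      rw [← hVofz]
      exact Vof_in_gadgets hzNP (by omega) hzKK
    have hne := constraint he hw hzM (gadget_in_parts he hzM hmem) hVall
    rw [hδA]
    exact othr_spec _ _ hne
  -- Step 2 : BeS is δB
  have hBe : ∀ β ∈ BeS e, c β = δB := by
    intro β hβ
    rw [BeS, mem_aset] at hβ
    obtain ⟨i, hi, hβv⟩ := hβ
    have hβM : β.val < MP e := by omega
    have hmem : Ablock e j ∈ gadgets e β :=
      Ablock_in_gadgets (by omega) (by omega) (by omega) Vs
    have hne := constraint he hw hβM (gadget_in_parts he hβM hmem) hAb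
    have := othr_spec _ _ hne
    rw [this, hδA, othr_othr]
  -- Step 3 : odd A-side is δA
  have hAodd : ∀ x : Fin (nP e), x.val < NP e → x.val % 2 = 1 → c x = δA := by
    intro x hx1 hx2
    have hxM : x.val < MP e := by omega
    have hmem := BeS_in_gadgets hx1 hx2
    have hne := constraint he hw hxM (gadget_in_parts he hxM hmem) hBe
    rw [hδA]
    exact othr_spec _ _ hne
  -- Step 4 : odd B-side is δB
  have hBodd : ∀ x : Fin (nP e), ¬ x.val < NP e → x.val < MP e → x.val % 2 = 1 →
      c x = δB := by
    intro x hx1 hx2 hx3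
    have hallF : ∀ z ∈ FoddS e, c z = δA := by
      intro z hz
      rw [FoddS, mem_aset] at hz
      obtain ⟨i, hi, hzv⟩ := hz
      exact hAodd z (by omega) (by omega)
    have hmem := Fodd_in_gadgets hx1 hx3
    have hne := constraint he hw hx2 (gadget_in_parts he hx2 hmem) hallF
    have := othr_spec _ _ hne
    rw [this, hδA, othr_othr]
  -- Step 5 : even A-side outside Ahat is δA
  have hAeven : ∀ x : Fin (nP e), x.val < NP e → x.val % 2 = 0 → ¬ x.val < KK e →
      c x = δA := by
    intro x hx1 hx2 hx3
    have hxM : x.val < MP e := by omega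
    have hallB : ∀ z ∈ BoS e, c z = δB := by
      intro z hz
      rw [BoS, mem_aset] at hz
      obtain ⟨i, hi, hzv⟩ := hz
      exact hBodd z (by omega) (by omega) (by omega)
    have hmem := BoS_in_gadgets hx1 hx2 hx3
    have hne := constraint he hw hxM (gadget_in_parts he hxM hmem) hallB
    rw [hδA]
    exact othr_spec _ _ hne
  -- Step 6 : the infinite vertex is δB
  have hinf : ∀ v : Fin (nP e), v.val = MP e → c v = δB := by
    have hastar : (astar e) < NP e := by omega
    set xa : Fin (nP e) := ⟨astar e, by omega⟩ with hxa
    have hxav : (xa : Fin (nP e)).val = astar e := rfl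
    have hxaM : (xa : Fin (nP e)).val < MP e := by omega
    have hmem := Linf_in_gadgets he (x := xa) rfl
    obtain ⟨a, ha, hne⟩ := hw _ (mem_stars_mk he hxaM (gadget_in_parts he hxaM hmem))
    have hca : c xa = δA := hAodd xa (by omega) (by omega)
    have ha' : a ∈ LinfGrp e := ha
    have haM : a.val = MP e := by
      rw [LinfGrp, mem_union] at ha'
      rcases ha' with ha' | ha'
      · simp only [mem_filter, mem_univ, true_and] at ha'
        exact ha'
      · exfalso
        rw [mem_aset] at ha'
        obtain ⟨i, hi, hav⟩ := ha'
        have : c a = δA := hAeven a (by omega) (by omega) (by omega)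
        rw [hca] at hne
        exact hne this
    intro v hv
    have hva : v = a := Fin.ext (by omega)
    rw [hva]
    rw [hca] at hne
    have := othr_spec _ _ hne
    rw [this, hδA, othr_othr]
  -- Step 7 : even B-side is δB
  have hBeven : ∀ x : Fin (nP e), ¬ x.val < NP e → x.val < MP e → x.val % 2 = 0 →
      c x = δB := by
    intro x hx1 hx2 hx3
    by_cases hr : NP2 e ≤ x.val ∧ x.val < NP2 e + 2*e
    · apply hBe
      rw [BeS, mem_aset]
      exact ⟨(x.val - NP2 e)/2, by omega, by omega⟩
    · have hallF : ∀ z ∈ FevenS e, c z = δA := by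
        intro z hz
        rw [FevenS, mem_aset] at hz
        obtain ⟨i, hi, hzv⟩ := hz
        exact hAeven z (by omega) (by omega) (by omega)
      have hmem := Feven_in_gadgets hx1 hx3 hr
      have hne := constraint he hw hx2 (gadget_in_parts he hx2 hmem) hallF
      have := othr_spec _ _ hne
      rw [this, hδA, othr_othr]
  -- Step 8 : Ahat is δA
  have hAhat : ∀ x : Fin (nP e), x.val < NP e → x.val % 2 = 0 → x.val < KK e →
      c x = δA := by
    intro x hx1 hx2 hx3
    have hxM : x.val < MP e := by omega
    have hallQ : ∀ z ∈ QhatS e, c z = δB := by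
      intro z hz
      rw [QhatS, mem_aset] at hz
      obtain ⟨i, hi, hzv⟩ := hz
      exact hBodd z (by omega) (by omega) (by omega)
    have hmem := Qhat_in_gadgets hx1 hx2 hx3
    have hne := constraint he hw hxM (gadget_in_parts he hxM hmem) hallQ
    rw [hδA]
    exact othr_spec _ _ hne
  -- Conclusion
  refine ⟨δA, funext fun v => ?_⟩
  unfold cpat
  by_cases h : v.val < NP e
  · rw [if_pos h]
    rcases Nat.mod_two_eq_zero_or_one v.val with hp | hp
    · by_cases hk : v.val < KK e
      · exact hAhat v h hp hk
      · exact hAeven v h hp hk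
    · exact hAodd v h hp
  · rw [if_neg h]
    have hδBA : δB = othr δA := by rw [hδA, othr_othr]
    rw [← hδBA]
    by_cases hM : v.val = MP e
    · exact hinf v hM
    · have hvM : v.val < MP e := by have := val_lt_n he v; omega
      rcases Nat.mod_two_eq_zero_or_one v.val with hp | hp
      · exact hBeven v h hvM hp
      · exact hBodd v h hvM hp

lemma uniq {e : ℕ} (he : 3 ≤ e) : UniquelyColourable (sys e he) 2 := by
  intro c₁ c₂ h₁ h₂
  obtain ⟨δ₁, rfl⟩ := force he h₁
  obtain ⟨δ₂, rfl⟩ := force he h₂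
  refine ⟨Equiv.swap δ₁ δ₂, funext fun v => ?_⟩
  simp only [Function.comp_apply]
  unfold cpat
  by_cases h : v.val < NP e
  · rw [if_pos h, if_pos h, Equiv.swap_apply_left]
  · rw [if_neg h, if_neg h]
    clear h₁ h₂
    revert δ₁ δ₂
    decide

end S14

/-- For every `e ≥ 3` there is a strongly equitable uniquely 2-chromatic `e`-star
system of some order `n ≡ 0 (mod 2e)`. -/
theorem stmt14 (e : ℕ) (he : 3 ≤ e) :
    ∃ n : ℕ, n % (2 * e) = 0 ∧
      ∃ sys : EStarSystem n e,
        (∃ c : Fin n → Fin 2, IsWeakColouring sys c ∧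
          ∀ i : Fin 2, classCard c i = n / 2) ∧
        ¬ Colourable sys 1 ∧
        UniquelyColourable sys 2 := by
  refine ⟨S14.nP e, ?_, S14.sys e he, ⟨S14.cpat e 0, S14.weak_cpat he 0, S14.equit he⟩,
    S14.not1 he, S14.uniq he⟩
  have h : S14.nP e = 2 * e * S14.mP e := by unfold S14.nP S14.NP; ring
  rw [h]
  exact Nat.mul_mod_right _ _
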